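/- arXiv:2506.16470 — 3 statements merged into one kernel-verified Lean document; each statement's English description precedes it below -/
import Mathlib

section
/- Let T > 0, let y : [0,T] → ℝ^{N_h} be twice continuously differentiable, let f : [0,T] × ℝ^{N_h} → ℝ^{N_h} satisfy y′(t) = f(t, y(t)) for all t ∈ [0,T] and be L-Lipschitz continuous in its second argument (‖f(t,x) − f(t,w)‖ ≤ L‖x − w‖ for all t, x, w). Let 0 ≤ t_n < t_{n+1} ≤ T with Δt := t_{n+1} − t_n, and let Ṽ be a real N_h × N matrix with orthonormal columns such that Ṽ Ṽᵀ y(t_n) = y(t_n). Define the local truncation error τ := (y(t_{n+1}) − y(t_n))/Δt − f(t_{n+1}, Ṽ Ṽᵀ y(t_{n+1})). Then ‖τ‖ ≤ Δt · L · max_{t∈[0,T]} ‖y′(t)‖ + (1/2)(Δt + L·Δt²) · max_{t∈[0,T]} ‖y″(t)‖. In particular the truncation error is O(Δt), so the IMEX--RB scheme is consistent of order 1. -/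
open Set Matrix

lemma proj_sub_norm_le' {Nh N : ℕ} (Vt : Matrix (Fin Nh) (Fin N) ℝ)
    (hVt : Vt.transpose * Vt = 1) (v p : EuclideanSpace ℝ (Fin Nh))
    (hp : p = Vt.mulVec (Vt.transpose.mulVec v)) : ‖v - p‖ ≤ ‖v‖ := by
  have hdot : ∀ a b : EuclideanSpace ℝ (Fin Nh),
      inner ℝ a b = dotProduct (fun i => a i) (fun i => b i) := by
    intro a b
    simp [PiLp.inner_apply, RCLike.inner_apply, dotProduct, mul_comm]
  have hq : Vtᵀ *ᵥ (Vt *ᵥ (Vtᵀ *ᵥ v)) = Vtᵀ *ᵥ v := by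
    rw [Matrix.mulVec_mulVec, hVt, Matrix.one_mulVec]
  have h3 : ∀ (u w' : _), (Vt *ᵥ w') ⬝ᵥ u = w' ⬝ᵥ (Vtᵀ *ᵥ u) := by
    intro u w'
    rw [← Matrix.vecMul_transpose, ← Matrix.dotProduct_mulVec]
  have key : inner ℝ v p = inner ℝ p p := by
    rw [hdot, hdot, hp]
    show dotProduct v (Vt *ᵥ (Vtᵀ *ᵥ v)) =
      dotProduct (Vt *ᵥ (Vtᵀ *ᵥ v)) (Vt *ᵥ (Vtᵀ *ᵥ v))
    rw [dotProduct_comm, h3, h3, hq]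
  have hsq : ‖v - p‖ ^ 2 ≤ ‖v‖ ^ 2 := by
    have h := norm_sub_sq_real v p
    have hpp : inner ℝ p p = ‖p‖ ^ 2 := real_inner_self_eq_norm_sq p
    nlinarith [sq_nonneg ‖p‖]
  nlinarith [norm_nonneg (v - p), norm_nonneg v]

lemma proj_key {Nh N : ℕ} (Vt : Matrix (Fin Nh) (Fin N) ℝ)
    (hVt : Vt.transpose * Vt = 1) (a b p : EuclideanSpace ℝ (Fin Nh))
    (hp : p = Vt.mulVec (Vt.transpose.mulVec a))
    (hb : Vt.mulVec (Vt.transpose.mulVec b) = b) :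
    ‖a - p‖ ≤ ‖a - b‖ := by
  have h := proj_sub_norm_le' Vt hVt (a - b) (p - b) ?_
  · rwa [sub_sub_sub_cancel_right] at h
  · rw [WithLp.ofLp_sub, hp]
    conv_lhs => rw [← hb]
    show (Vt *ᵥ (Vtᵀ *ᵥ (a : Fin Nh → ℝ)) : Fin Nh → ℝ) - (Vt *ᵥ (Vtᵀ *ᵥ (b : Fin Nh → ℝ)))
        = Vt *ᵥ (Vtᵀ *ᵥ ((a : Fin Nh → ℝ) - (b : Fin Nh → ℝ)))
    rw [Matrix.mulVec_sub, Matrix.mulVec_sub]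


/-- **Consistency of IMEX--RB (order 1).**
Let `y : [0,T] → ℝ^{N_h}` be twice continuously differentiable with `y′(t) = f(t, y(t))`,
`f` `L`-Lipschitz in its second argument, and let `Ṽ` have orthonormal columns with
`Ṽ Ṽᵀ y(tₙ) = y(tₙ)`.  Then the local truncation error
`τ = (y(t_{n+1}) − y(tₙ))/Δt − f(t_{n+1}, Ṽ Ṽᵀ y(t_{n+1}))` satisfies
`‖τ‖ ≤ Δt L max ‖y′‖ + ½ (Δt + L Δt²) max ‖y″‖`, so the scheme is consistent of order 1. -/
theorem imexrb_consistency
    (Nh N : ℕ) (T : ℝ) (hT : 0 < T)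
    (y y' y'' : ℝ → EuclideanSpace ℝ (Fin Nh))
    (hy' : ∀ t ∈ Set.Icc (0 : ℝ) T, HasDerivWithinAt y (y' t) (Set.Icc (0 : ℝ) T) t)
    (hy'' : ∀ t ∈ Set.Icc (0 : ℝ) T, HasDerivWithinAt y' (y'' t) (Set.Icc (0 : ℝ) T) t)
    (hy''cont : ContinuousOn y'' (Set.Icc (0 : ℝ) T))
    (f : ℝ → EuclideanSpace ℝ (Fin Nh) → EuclideanSpace ℝ (Fin Nh))
    (hode : ∀ t ∈ Set.Icc (0 : ℝ) T, y' t = f t (y t))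
    (L : ℝ) (hL : 0 < L)
    (hLip : ∀ (t : ℝ) (x w : EuclideanSpace ℝ (Fin Nh)), ‖f t x - f t w‖ ≤ L * ‖x - w‖)
    (tn tn1 : ℝ) (htn : 0 ≤ tn) (htn1 : tn < tn1) (htn1T : tn1 ≤ T)
    (Δt : ℝ) (hΔt : Δt = tn1 - tn)
    (Vt : Matrix (Fin Nh) (Fin N) ℝ)
    (hVt : Vt.transpose * Vt = 1)
    (hproj : Vt.mulVec (Vt.transpose.mulVec (y tn)) = y tn)
    (τ : EuclideanSpace ℝ (Fin Nh))
    (hτ : τ = Δt⁻¹ • (y tn1 - y tn) - f tn1 (WithLp.toLp 2 (Vt.mulVec (Vt.transpose.mulVec (y tn1)))))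
    (My' My'' : ℝ)
    (hMy' : ∀ t ∈ Set.Icc (0 : ℝ) T, ‖y' t‖ ≤ My')
    (hMy'' : ∀ t ∈ Set.Icc (0 : ℝ) T, ‖y'' t‖ ≤ My'') :
    ‖τ‖ ≤ Δt * L * My' + (1 / 2) * (Δt + L * Δt ^ 2) * My'' := by
  have hΔtpos : 0 < Δt := by rw [hΔt]; linarith
  have htnI : tn ∈ Icc (0:ℝ) T := ⟨htn, le_trans htn1.le htn1T⟩
  have htn1I : tn1 ∈ Icc (0:ℝ) T := ⟨le_trans htn htn1.le, htn1T⟩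
  have hsub : Icc tn tn1 ⊆ Icc (0:ℝ) T := Icc_subset_Icc htn htn1T
  have hM''0 : 0 ≤ My'' := (norm_nonneg _).trans (hMy'' tn htnI)
  have hM'0 : 0 ≤ My' := (norm_nonneg _).trans (hMy' tn htnI)
  -- step 6 : ‖y tn1 - y tn‖ ≤ My' * Δt
  have hstep : ‖y tn1 - y tn‖ ≤ My' * Δt := by
    have h := (convex_Icc (0:ℝ) T).norm_image_sub_le_of_norm_hasDerivWithin_le
      hy' hMy' htnI htn1I
    rwa [Real.norm_eq_abs, abs_of_pos (by linarith), ← hΔt] at h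
  -- step 7 : Lipschitz bound on y'
  have hy'diff : ∀ t ∈ Icc tn tn1, ‖y' t - y' tn1‖ ≤ My'' * (tn1 - t) := by
    intro t ht
    have h := (convex_Icc (0:ℝ) T).norm_image_sub_le_of_norm_hasDerivWithin_le
      hy'' hMy'' htn1I (hsub ht)
    rwa [Real.norm_eq_abs, abs_of_nonpos (by linarith [ht.2]), neg_sub] at h
  -- step 8 : backward Taylor bound
  set F : ℝ → EuclideanSpace ℝ (Fin Nh) := fun t => y t - y tn - (t - tn) • y' tn1 with hF
  have hTay : ‖y tn1 - y tn - Δt • y' tn1‖ ≤ My'' * Δt ^ 2 / 2 := by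
    set B : ℝ → ℝ := fun t => My'' * ((t - tn) * Δt - (t - tn) ^ 2 / 2) with hB
    set B' : ℝ → ℝ := fun t => My'' * (tn1 - t) with hB'
    have hFc : ContinuousOn F (Icc tn tn1) := by
      apply ContinuousOn.sub
      apply ContinuousOn.sub
      · exact fun t ht => ((hy' t (hsub ht)).continuousWithinAt).mono hsub
      · exact continuousOn_const
      · exact (Continuous.smul (by fun_prop : Continuous fun t : ℝ => t - tn) continuous_const).continuousOn
    have hFd : ∀ x ∈ Ico tn tn1, HasDerivWithinAt F (y' x - y' tn1) (Ici x) x := by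
      intro x hx
      have hxI : x ∈ Icc tn tn1 := Ico_subset_Icc_self hx
      have h1 : HasDerivWithinAt y (y' x) (Ici x) x := by
        refine ((hy' x (hsub hxI)).mono ((Icc_subset_Icc hx.1 le_rfl).trans hsub)).mono_of_mem_nhdsWithin ?_
        exact Icc_mem_nhdsGE_of_mem ⟨le_rfl, hx.2⟩
      have h2 : HasDerivWithinAt (fun t : ℝ => (t - tn) • y' tn1) ((1:ℝ) • y' tn1) (Ici x) x :=
        (((hasDerivWithinAt_id x (Ici x)).sub_const tn)).smul_const (y' tn1)
      have h12 := (h1.sub_const (y tn)).sub h2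
      rw [one_smul] at h12
      exact h12
    have hBd : ∀ x : ℝ, HasDerivAt B (B' x) x := by
      intro x
      have h1 : HasDerivAt (fun t : ℝ => t - tn) 1 x := (hasDerivAt_id x).sub_const tn
      have h2 : HasDerivAt (fun t : ℝ => (t - tn) * Δt) Δt x := by simpa using h1.mul_const Δt
      have h3 : HasDerivAt (fun t : ℝ => (t - tn) ^ 2 / 2) (x - tn) x := by
        have := (h1.pow 2).div_const 2
        refine this.congr_deriv ?_
        ring
      have h5 := (h2.sub h3).const_mul My''
      refine h5.congr_deriv ?_
      rw [hB', hΔt]; ring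
    have ha : ‖F tn‖ ≤ B tn := by simp [hF, hB]
    have bound : ∀ x ∈ Ico tn tn1, ‖y' x - y' tn1‖ ≤ B' x := fun x hx =>
      hy'diff x (Ico_subset_Icc_self hx)
    have h := image_norm_le_of_norm_deriv_right_le_deriv_boundary hFc hFd ha hBd bound
      (right_mem_Icc.2 htn1.le)
    have hB1 : B tn1 = My'' * Δt ^ 2 / 2 := by simp only [hB]; rw [hΔt]; ring
    have hF1 : F tn1 = y tn1 - y tn - Δt • y' tn1 := by simp only [hF]; rw [hΔt]
    rwa [hF1, hB1] at h
  -- step 9 : first piece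
  have first : ‖Δt⁻¹ • (y tn1 - y tn) - y' tn1‖ ≤ My'' * Δt / 2 := by
    have heq : Δt⁻¹ • (y tn1 - y tn) - y' tn1
        = Δt⁻¹ • (y tn1 - y tn - Δt • y' tn1) := by
      rw [smul_sub Δt⁻¹ (y tn1 - y tn) (Δt • y' tn1), smul_smul,
        inv_mul_cancel₀ hΔtpos.ne', one_smul]
    rw [heq, norm_smul, Real.norm_eq_abs, abs_of_pos (inv_pos.2 hΔtpos)]
    calc Δt⁻¹ * ‖y tn1 - y tn - Δt • y' tn1‖ ≤ Δt⁻¹ * (My'' * Δt ^ 2 / 2) := by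
          exact mul_le_mul_of_nonneg_left hTay (inv_pos.2 hΔtpos).le
      _ = My'' * Δt / 2 := by field_simp
  -- step 10 : second piece
  have second : ‖f tn1 (y tn1) - f tn1 (WithLp.toLp 2 (Vt.mulVec (Vt.transpose.mulVec (y tn1))))‖
      ≤ L * (My' * Δt) := by
    refine (hLip tn1 _ _).trans ?_
    refine mul_le_mul_of_nonneg_left ?_ hL.le
    refine le_trans ?_ hstep
    refine le_trans (le_of_eq ?_)
      (proj_key Vt hVt (y tn1) (y tn) (WithLp.toLp 2 (Vt.mulVec (Vt.transpose.mulVec (y tn1)))) rfl hproj)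
    rfl
  -- conclusion
  have hsplit : τ = (Δt⁻¹ • (y tn1 - y tn) - y' tn1)
      + (f tn1 (y tn1) - f tn1 (WithLp.toLp 2 (Vt.mulVec (Vt.transpose.mulVec (y tn1))))) := by
    rw [hτ, hode tn1 htn1I]
    abel
  calc ‖τ‖ ≤ ‖Δt⁻¹ • (y tn1 - y tn) - y' tn1‖
      + ‖f tn1 (y tn1) - f tn1 (WithLp.toLp 2 (Vt.mulVec (Vt.transpose.mulVec (y tn1))))‖ := by
        rw [hsplit]; exact norm_add_le _ _
    _ ≤ My'' * Δt / 2 + L * (My' * Δt) := add_le_add first second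
    _ ≤ Δt * L * My' + (1 / 2) * (Δt + L * Δt ^ 2) * My'' := by
        nlinarith [mul_nonneg (mul_nonneg hL.le (sq_nonneg Δt)) hM''0]
end

section
/- Let T > 0, let y : [0,T] → ℝ^{N_h} be twice continuously differentiable, let f : [0,T] × ℝ^{N_h} → ℝ^{N_h} satisfy y′(t) = f(t, y(t)) and be L-Lipschitz in its second argument. Let 0 ≤ t_n < t_{n+1} ≤ T, Δt := t_{n+1} − t_n, and suppose Δt·L < 1, y(t_n) ≠ 0, and u_n ∈ ℝ^{N_h} with u_n ≠ 0. Let u_{n+1} ∈ ℝ^{N_h} satisfy the IMEX--RB step with one-dimensional basis V = u_n/‖u_n‖: u_{n+1} = u_n + Δt f(t_{n+1}, (u_n u_nᵀ/‖u_n‖²) u_{n+1}). Define the errors e_n := y(t_n) − u_n, e_{n+1} := y(t_{n+1}) − u_{n+1}, the ratio C := ‖y(t_{n+1})‖/‖y(t_n)‖, and the local truncation error τ_{n+1} := (y(t_{n+1}) − y(t_n))/Δt − f(t_{n+1}, (y(t_n) y(t_n)ᵀ/‖y(t_n)‖²) y(t_{n+1})). Then ‖e_{n+1}‖ ≤ ((1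 + 4 Δt C L)/(1 − Δt L)) ‖e_n‖ + (Δt/(1 − Δt L)) ‖τ_{n+1}‖. -/
lemma proj_eq {n : ℕ} (u x : EuclideanSpace ℝ (Fin n)) :
    ((WithLp.toLp 2 (((‖u‖ ^ 2)⁻¹ • Matrix.vecMulVec u u).mulVec x) : EuclideanSpace ℝ (Fin n)))
      = ((‖u‖ ^ 2)⁻¹ * inner ℝ u x) • u := by
  ext i
  simp [Matrix.mulVec, Matrix.vecMulVec, dotProduct, PiLp.inner_apply, RCLike.inner_apply,
    Finset.mul_sum, Finset.sum_mul, PiLp.smul_apply]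
  exact Finset.sum_congr rfl fun j _ => by ring

lemma proj_eq2 {n : ℕ} (u x : EuclideanSpace ℝ (Fin n)) :
    ((WithLp.toLp 2 (((‖u‖ ^ 2)⁻¹ • Matrix.vecMulVec u u).mulVec x) : EuclideanSpace ℝ (Fin n)))
      = (inner ℝ (‖u‖⁻¹ • u) x : ℝ) • (‖u‖⁻¹ • u) := by
  rw [proj_eq, real_inner_smul_left, smul_smul]
  congr 1
  rw [sq, mul_inv]
  ring

lemma unit_diff {E : Type*} [NormedAddCommGroup E] [InnerProductSpace ℝ E] (u v : E)
    (hu : u ≠ 0) (hv : v ≠ 0) :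
    ‖‖v‖⁻¹ • v - ‖u‖⁻¹ • u‖ ≤ 2 * ‖v - u‖ / ‖v‖ := by
  have hv0 : (0:ℝ) < ‖v‖ := norm_pos_iff.mpr hv
  have hu0 : (0:ℝ) < ‖u‖ := norm_pos_iff.mpr hu
  have hdec : ‖v‖⁻¹ • v - ‖u‖⁻¹ • u = ‖v‖⁻¹ • (v - u) + (‖v‖⁻¹ - ‖u‖⁻¹) • u := by
    rw [smul_sub, sub_smul]; abel
  rw [hdec]
  have h1 : ‖‖v‖⁻¹ • (v - u)‖ = ‖v - u‖ / ‖v‖ := by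
    rw [norm_smul, Real.norm_eq_abs, abs_of_pos (inv_pos.mpr hv0), inv_mul_eq_div]
  have h2 : ‖(‖v‖⁻¹ - ‖u‖⁻¹) • u‖ ≤ ‖v - u‖ / ‖v‖ := by
    rw [norm_smul, Real.norm_eq_abs]
    have he : ‖v‖⁻¹ - ‖u‖⁻¹ = (‖u‖ - ‖v‖) / (‖u‖ * ‖v‖) := by
      field_simp
    rw [he, abs_div, abs_of_pos (mul_pos hu0 hv0)]
    have hb : |‖u‖ - ‖v‖| ≤ ‖v - u‖ := by
      rw [norm_sub_rev]; exact abs_norm_sub_norm_le u v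
    rw [div_mul_eq_mul_div, div_le_div_iff₀ (mul_pos hu0 hv0) hv0]
    calc |‖u‖ - ‖v‖| * ‖u‖ * ‖v‖ ≤ ‖v - u‖ * ‖u‖ * ‖v‖ :=
          mul_le_mul_of_nonneg_right (mul_le_mul_of_nonneg_right hb hu0.le) hv0.le
      _ = ‖v - u‖ * (‖u‖ * ‖v‖) := by ring
  calc ‖‖v‖⁻¹ • (v - u) + (‖v‖⁻¹ - ‖u‖⁻¹) • u‖
      ≤ ‖‖v‖⁻¹ • (v - u)‖ + ‖(‖v‖⁻¹ - ‖u‖⁻¹) • u‖ := norm_add_le _ _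
    _ ≤ ‖v - u‖ / ‖v‖ + ‖v - u‖ / ‖v‖ := by rw [h1]; linarith
    _ = 2 * ‖v - u‖ / ‖v‖ := by ring

lemma proj_diff {E : Type*} [NormedAddCommGroup E] [InnerProductSpace ℝ E] (a b x : E)
    (ha : ‖a‖ = 1) (hb : ‖b‖ = 1) :
    ‖(inner ℝ b x : ℝ) • b - (inner ℝ a x : ℝ) • a‖ ≤ 2 * ‖b - a‖ * ‖x‖ := by
  have hdec : (inner ℝ b x : ℝ) • b - (inner ℝ a x : ℝ) • a
      = (inner ℝ (b - a) x : ℝ) • b + (inner ℝ a x : ℝ) • (b - a) := by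
    rw [inner_sub_left, sub_smul, smul_sub]; abel
  rw [hdec]
  refine (norm_add_le _ _).trans ?_
  rw [norm_smul, norm_smul, hb, Real.norm_eq_abs, Real.norm_eq_abs, mul_one]
  have h1 := abs_real_inner_le_norm (b - a) x
  have h2 := abs_real_inner_le_norm a x
  rw [ha, one_mul] at h2
  have h3 := mul_le_mul_of_nonneg_right h2 (norm_nonneg (b - a))
  linarith

/-- **One-step error recursion for IMEX--RB with one-dimensional basis.**
If `u_{n+1} = uₙ + Δt f(t_{n+1}, (uₙuₙᵀ/‖uₙ‖²) u_{n+1})` and `Δt L < 1`, the errors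
`eₙ = y(tₙ) − uₙ`, `e_{n+1} = y(t_{n+1}) − u_{n+1}` satisfy
`‖e_{n+1}‖ ≤ ((1 + 4 Δt C L)/(1 − Δt L)) ‖eₙ‖ + (Δt/(1 − Δt L)) ‖τ_{n+1}‖`, where
`C = ‖y(t_{n+1})‖/‖y(tₙ)‖` and `τ_{n+1}` is the local truncation error. -/
theorem imexrb_one_step_error_bound
    (Nh : ℕ) (T : ℝ) (hT : 0 < T)
    (y y' y'' : ℝ → EuclideanSpace ℝ (Fin Nh))
    (hy' : ∀ t ∈ Set.Icc (0 : ℝ) T, HasDerivWithinAt y (y' t) (Set.Icc (0 : ℝ) T) t)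
    (hy'' : ∀ t ∈ Set.Icc (0 : ℝ) T, HasDerivWithinAt y' (y'' t) (Set.Icc (0 : ℝ) T) t)
    (hy''cont : ContinuousOn y'' (Set.Icc (0 : ℝ) T))
    (f : ℝ → EuclideanSpace ℝ (Fin Nh) → EuclideanSpace ℝ (Fin Nh))
    (hode : ∀ t ∈ Set.Icc (0 : ℝ) T, y' t = f t (y t))
    (L : ℝ)
    (hLip : ∀ (t : ℝ) (x w : EuclideanSpace ℝ (Fin Nh)), ‖f t x - f t w‖ ≤ L * ‖x - w‖)
    (tn tn1 : ℝ) (htn : 0 ≤ tn) (htn1 : tn < tn1) (htn1T : tn1 ≤ T)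
    (Δt : ℝ) (hΔt : Δt = tn1 - tn) (hΔtL : Δt * L < 1)
    (hyn : y tn ≠ 0)
    (un : EuclideanSpace ℝ (Fin Nh)) (hun : un ≠ 0)
    (un1 : EuclideanSpace ℝ (Fin Nh))
    (hun1 : un1 = un + Δt • f tn1 ((WithLp.toLp 2 (((‖un‖ ^ 2)⁻¹ • Matrix.vecMulVec un un).mulVec un1) :
      EuclideanSpace ℝ (Fin Nh))))
    (en en1 : EuclideanSpace ℝ (Fin Nh))
    (hen : en = y tn - un) (hen1 : en1 = y tn1 - un1)
    (C : ℝ) (hC : C = ‖y tn1‖ / ‖y tn‖)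
    (τ : EuclideanSpace ℝ (Fin Nh))
    (hτ : τ = Δt⁻¹ • (y tn1 - y tn) -
      f tn1 ((WithLp.toLp 2 (((‖y tn‖ ^ 2)⁻¹ • Matrix.vecMulVec (y tn) (y tn)).mulVec (y tn1)) :
        EuclideanSpace ℝ (Fin Nh)))) :
    ‖en1‖ ≤ ((1 + 4 * Δt * C * L) / (1 - Δt * L)) * ‖en‖ + (Δt / (1 - Δt * L)) * ‖τ‖ := by
  have hΔpos : 0 < Δt := by rw [hΔt]; linarith
  have hΔne : Δt ≠ 0 := hΔpos.ne'
  have hyn0 : (0:ℝ) < ‖y tn‖ := norm_pos_iff.mpr hyn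
  have hL : 0 ≤ L := by
    have h := hLip tn1 (y tn) 0
    rw [sub_zero] at h
    have h0 := (norm_nonneg (f tn1 (y tn) - f tn1 0)).trans h
    exact le_of_mul_le_mul_right (by simpa using h0) hyn0
  rw [proj_eq2] at hun1 hτ
  set a : EuclideanSpace ℝ (Fin Nh) := ‖un‖⁻¹ • un with ha_def
  set b : EuclideanSpace ℝ (Fin Nh) := ‖y tn‖⁻¹ • y tn with hb_def
  have ha1 : ‖a‖ = 1 := norm_smul_inv_norm hun
  have hb1 : ‖b‖ = 1 := norm_smul_inv_norm hyn
  set Pu : EuclideanSpace ℝ (Fin Nh) := (inner ℝ a un1 : ℝ) • a with hPu_def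
  set Py : EuclideanSpace ℝ (Fin Nh) := (inner ℝ b (y tn1) : ℝ) • b with hPy_def
  -- error equation
  have hstep : Δt • τ = (y tn1 - y tn) - Δt • f tn1 Py := by
    rw [hτ, smul_sub, smul_smul, mul_inv_cancel₀ hΔne, one_smul]
  have hkey : en1 = en + Δt • τ + Δt • (f tn1 Py - f tn1 Pu) := by
    rw [hen1, hen, hun1, hstep, smul_sub]
    abel
  -- norm of projection difference
  have hba : ‖b - a‖ ≤ 2 * ‖en‖ / ‖y tn‖ := by
    rw [hen]; exact unit_diff un (y tn) hun hyn
  have hPdiff : ‖Py - Pu‖ ≤ 4 * C * ‖en‖ + ‖en1‖ := by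
    have hsplit : Py - Pu = ((inner ℝ b (y tn1) : ℝ) • b - (inner ℝ a (y tn1) : ℝ) • a)
        + (inner ℝ a en1 : ℝ) • a := by
      rw [hPu_def, hPy_def, hen1, inner_sub_right, sub_smul]; abel
    rw [hsplit]
    have h1 : ‖(inner ℝ b (y tn1) : ℝ) • b - (inner ℝ a (y tn1) : ℝ) • a‖
        ≤ 2 * ‖b - a‖ * ‖y tn1‖ := proj_diff a b (y tn1) ha1 hb1
    have h2 : ‖(inner ℝ a en1 : ℝ) • a‖ ≤ ‖en1‖ := by
      rw [norm_smul, ha1, mul_one, Real.norm_eq_abs]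
      have := abs_real_inner_le_norm a en1
      rw [ha1, one_mul] at this
      exact this
    refine (norm_add_le _ _).trans ?_
    have h3 : 2 * ‖b - a‖ * ‖y tn1‖ ≤ 4 * C * ‖en‖ := by
      have : 2 * ‖b - a‖ * ‖y tn1‖ ≤ 2 * (2 * ‖en‖ / ‖y tn‖) * ‖y tn1‖ :=
        mul_le_mul_of_nonneg_right (mul_le_mul_of_nonneg_left hba (by norm_num))
          (norm_nonneg (y tn1))
      refine this.trans (le_of_eq ?_)
      rw [hC]
      field_simp
      ring
    linarith
  -- main inequality
  have hmain : ‖en1‖ ≤ ‖en‖ + Δt * ‖τ‖ + Δt * (L * ‖Py - Pu‖) := by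
    rw [hkey]
    refine (norm_add_le _ _).trans ?_
    have h1 : ‖en + Δt • τ‖ ≤ ‖en‖ + Δt * ‖τ‖ := by
      refine (norm_add_le _ _).trans ?_
      rw [norm_smul, Real.norm_eq_abs, abs_of_pos hΔpos]
    have h2 : ‖Δt • (f tn1 Py - f tn1 Pu)‖ ≤ Δt * (L * ‖Py - Pu‖) := by
      rw [norm_smul, Real.norm_eq_abs, abs_of_pos hΔpos]
      exact mul_le_mul_of_nonneg_left (hLip tn1 Py Pu) hΔpos.le
    linarith
  have hDpos : 0 < 1 - Δt * L := by linarith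
  rw [div_mul_eq_mul_div, div_mul_eq_mul_div, ← add_div, le_div_iff₀ hDpos]
  have hDL : 0 ≤ Δt * L := mul_nonneg hΔpos.le hL
  have h4 : Δt * L * ‖Py - Pu‖ ≤ Δt * L * (4 * C * ‖en‖ + ‖en1‖) :=
    mul_le_mul_of_nonneg_left hPdiff hDL
  nlinarith [hmain, h4]
end

section
/- Let T > 0, let y : [0,T] → ℝ^{N_h} be twice continuously differentiable with y(t) ≠ 0 for all t ∈ [0,T], and let f : [0,T] × ℝ^{N_h} → ℝ^{N_h} satisfy y′(t) = f(t, y(t)) for all t and be L-Lipschitz continuous in its second argument. There exists a constant K > 0, depending only on T, L, min_{[0,T]}‖y‖, max_{[0,T]}‖y‖, max_{[0,T]}‖y′‖ and max_{[0,T]}‖y″‖ (but not on Δt or n), such that the following holds: for every N_t ∈ ℕ with Δt := T/N_t satisfying Δt·L < 1, if the sequence (u_n)_{n=0}^{N_t} ⊂ ℝ^{N_h} is defined by u_0 = y(0), u_n ≠ 0 for all n, and u_{n+1} = u_n + Δt f(t_{n+1}, (u_n u_nᵀ/‖u_n‖²) u_{n+1}) with t_n = nΔt, then ‖y(t_n)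 − u_n‖ ≤ K·Δt for all 0 ≤ n ≤ N_t. That is, the IMEX--RB method is convergent of order 1. -/
open scoped RealInnerProductSpace

private lemma imexrb_mulVec_eq {Nh : ℕ} (u v : EuclideanSpace ℝ (Fin Nh)) :
    (WithLp.toLp 2 (((‖u‖ ^ 2)⁻¹ • Matrix.vecMulVec u u).mulVec v) : EuclideanSpace ℝ (Fin Nh))
      = ((‖u‖ ^ 2)⁻¹ * ⟪u, v⟫) • u := by
  ext i
  simp only [PiLp.toLp_apply, Matrix.mulVec, Matrix.smul_apply, Matrix.vecMulVec_apply, dotProduct,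
    Pi.smul_apply, smul_eq_mul, PiLp.inner_apply, RCLike.inner_apply, conj_trivial,
    PiLp.smul_apply, Finset.sum_mul, Finset.mul_sum]
  exact Finset.sum_congr rfl fun j _ => by ring

private lemma imexrb_proj_le {E : Type*} [NormedAddCommGroup E] [InnerProductSpace ℝ E]
    (u w : E) (hu : u ≠ 0) :
    ‖((‖u‖ ^ 2)⁻¹ * ⟪u, w⟫) • u‖ ≤ ‖w‖ ∧ ‖w - ((‖u‖ ^ 2)⁻¹ * ⟪u, w⟫) • u‖ ≤ ‖w‖ := by
  set c : ℝ := (‖u‖ ^ 2)⁻¹ * ⟪u, w⟫ with hc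
  have hn : ‖u‖ ^ 2 ≠ 0 := pow_ne_zero 2 (norm_ne_zero_iff.mpr hu)
  have hinner : ⟪(c • u : E), w - c • u⟫ = 0 := by
    rw [inner_sub_right, real_inner_smul_left, real_inner_smul_left, real_inner_smul_right,
      real_inner_self_eq_norm_sq, hc]
    field_simp
    ring
  have hpyth : ‖w‖ ^ 2 = ‖(c • u : E)‖ ^ 2 + ‖w - c • u‖ ^ 2 := by
    have h := norm_add_sq_real (c • u : E) (w - c • u)
    rw [add_sub_cancel, hinner] at h
    linarith
  constructor <;> nlinarith [norm_nonneg (c • u : E), norm_nonneg (w - c • u), norm_nonneg w]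

private lemma imexrb_proj_dist {E : Type*} [NormedAddCommGroup E] [InnerProductSpace ℝ E]
    (u z v : E) (hu : u ≠ 0) :
    ‖z - ((‖u‖ ^ 2)⁻¹ * ⟪u, v⟫) • u‖ ≤ ‖z - v‖ + ‖z - u‖ := by
  have hn : ‖u‖ ^ 2 ≠ 0 := pow_ne_zero 2 (norm_ne_zero_iff.mpr hu)
  have hPu : ((‖u‖ ^ 2)⁻¹ * ⟪u, u⟫) • u = u := by
    rw [real_inner_self_eq_norm_sq, inv_mul_cancel₀ hn, one_smul]
  have key : z - ((‖u‖ ^ 2)⁻¹ * ⟪u, v⟫) • u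
      = ((z - u) - ((‖u‖ ^ 2)⁻¹ * ⟪u, z - u⟫) • u) + ((‖u‖ ^ 2)⁻¹ * ⟪u, z - v⟫) • u := by
    rw [inner_sub_right, inner_sub_right, mul_sub, mul_sub, sub_smul, sub_smul, hPu]
    abel
  rw [key]
  calc ‖_ + _‖ ≤ ‖(z - u) - ((‖u‖ ^ 2)⁻¹ * ⟪u, z - u⟫) • u‖
        + ‖((‖u‖ ^ 2)⁻¹ * ⟪u, z - v⟫) • u‖ := norm_add_le _ _
    _ ≤ ‖z - u‖ + ‖z - v‖ :=
        add_le_add (imexrb_proj_le u (z - u) hu).2 (imexrb_proj_le u (z - v) hu).1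
    _ = ‖z - v‖ + ‖z - u‖ := add_comm _ _

set_option maxHeartbeats 2000000 in
/-- **Convergence of IMEX--RB (order 1).**
Under the regularity, non-vanishing and Lipschitz assumptions, there is a constant `K > 0`,
independent of `Δt` and `n`, such that for every number of timesteps `N_t` with
`Δt = T/N_t` and `Δt L < 1`, the IMEX--RB iterates with one-dimensional basis
`uₙ/‖uₙ‖` satisfy `‖y(tₙ) − uₙ‖ ≤ K Δt` for all `0 ≤ n ≤ N_t`. -/
theorem imexrb_convergence
    (Nh : ℕ) (T : ℝ) (hT : 0 < T)
    (y y' y'' : ℝ → EuclideanSpace ℝ (Fin Nh))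
    (hy' : ∀ t ∈ Set.Icc (0 : ℝ) T, HasDerivWithinAt y (y' t) (Set.Icc (0 : ℝ) T) t)
    (hy'' : ∀ t ∈ Set.Icc (0 : ℝ) T, HasDerivWithinAt y' (y'' t) (Set.Icc (0 : ℝ) T) t)
    (hy''cont : ContinuousOn y'' (Set.Icc (0 : ℝ) T))
    (hynz : ∀ t ∈ Set.Icc (0 : ℝ) T, y t ≠ 0)
    (f : ℝ → EuclideanSpace ℝ (Fin Nh) → EuclideanSpace ℝ (Fin Nh))
    (hode : ∀ t ∈ Set.Icc (0 : ℝ) T, y' t = f t (y t))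
    (L : ℝ)
    (hLip : ∀ (t : ℝ) (x w : EuclideanSpace ℝ (Fin Nh)), ‖f t x - f t w‖ ≤ L * ‖x - w‖) :
    ∃ K > (0 : ℝ), ∀ (Nt : ℕ), 0 < Nt → ∀ Δt : ℝ, Δt = T / Nt → Δt * L < 1 →
      ∀ u : ℕ → EuclideanSpace ℝ (Fin Nh),
        u 0 = y 0 →
        (∀ n ≤ Nt, u n ≠ 0) →
        (∀ n < Nt, u (n + 1) = u n + Δt •
          f ((n + 1 : ℕ) * Δt)
            ((WithLp.toLp 2 (((‖u n‖ ^ 2)⁻¹ • Matrix.vecMulVec (u n) (u n)).mulVec (u (n + 1))) :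
              EuclideanSpace ℝ (Fin Nh)))) →
        ∀ n ≤ Nt, ‖y (n * Δt) - u n‖ ≤ K * Δt := by
  classical
  -- bounds on derivatives
  have hy'cont : ContinuousOn y' (Set.Icc 0 T) := fun t ht => (hy'' t ht).continuousWithinAt
  obtain ⟨M1', hM1'⟩ := isCompact_Icc.exists_bound_of_continuousOn hy'cont
  obtain ⟨M2', hM2'⟩ := isCompact_Icc.exists_bound_of_continuousOn hy''cont
  set M1 := max M1' 0 with hM1def
  set M2 := max M2' 0 with hM2def
  have hM1 : ∀ t ∈ Set.Icc (0:ℝ) T, ‖y' t‖ ≤ M1 := fun t ht => (hM1' t ht).trans (le_max_left _ _)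
  have hM2 : ∀ t ∈ Set.Icc (0:ℝ) T, ‖y'' t‖ ≤ M2 := fun t ht => (hM2' t ht).trans (le_max_left _ _)
  have hM1nn : 0 ≤ M1 := le_max_right _ _
  have hM2nn : 0 ≤ M2 := le_max_right _ _
  -- L ≥ 0
  have h0T : (0:ℝ) ∈ Set.Icc (0:ℝ) T := ⟨le_refl _, hT.le⟩
  have hL : 0 ≤ L := by
    have h1 := hLip 0 (y 0) 0
    have h2 : 0 < ‖y 0‖ := norm_pos_iff.mpr (hynz 0 h0T)
    have h3 : (0:ℝ) ≤ ‖f 0 (y 0) - f 0 0‖ := norm_nonneg _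
    have h4 : ‖y 0 - 0‖ = ‖y 0‖ := by rw [sub_zero]
    nlinarith
  set C := L * M1 + M2 with hC
  have hCnn : 0 ≤ C := add_nonneg (mul_nonneg hL hM1nn) hM2nn
  -- Lipschitz bound on y
  have hyLip : ∀ a ∈ Set.Icc (0:ℝ) T, ∀ b ∈ Set.Icc (0:ℝ) T, ‖y b - y a‖ ≤ M1 * ‖b - a‖ :=
    fun a ha b hb =>
      Convex.norm_image_sub_le_of_norm_hasDerivWithin_le hy' hM1 (convex_Icc _ _) ha hb
  -- truncation error
  have htrunc : ∀ a b : ℝ, a ∈ Set.Icc (0:ℝ) T → b ∈ Set.Icc (0:ℝ) T → a ≤ b →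
      ‖y b - y a - (b - a) • y' b‖ ≤ M2 * (b - a) ^ 2 := by
    intro a b ha hb hab
    have hsub : Set.Icc a b ⊆ Set.Icc (0:ℝ) T := Set.Icc_subset_Icc ha.1 hb.2
    have ha' : a ∈ Set.Icc a b := ⟨le_refl _, hab⟩
    have hb' : b ∈ Set.Icc a b := ⟨hab, le_refl _⟩
    have hvar : ∀ t ∈ Set.Icc a b, ‖y' t - y' b‖ ≤ M2 * (b - a) := by
      intro t ht
      have h1 : ‖y' t - y' b‖ ≤ M2 * ‖t - b‖ :=
        Convex.norm_image_sub_le_of_norm_hasDerivWithin_le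
          (fun s hs => (hy'' s (hsub hs)).mono hsub)
          (fun s hs => hM2 s (hsub hs)) (convex_Icc _ _) hb' ht
      have h2 : ‖t - b‖ ≤ b - a := by
        rw [Real.norm_eq_abs, abs_sub_comm, abs_of_nonneg (by linarith [ht.1, ht.2])]
        linarith [ht.1]
      exact h1.trans (mul_le_mul_of_nonneg_left h2 hM2nn)
    have hg : ∀ t ∈ Set.Icc a b,
        HasDerivWithinAt (fun s => y s - s • y' b) (y' t - y' b) (Set.Icc a b) t := by
      intro t ht
      have h1 : HasDerivWithinAt (fun s : ℝ => s • y' b) (y' b) (Set.Icc a b) t := by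
        simpa using (hasDerivWithinAt_id t (Set.Icc a b)).smul_const (y' b)
      exact ((hy' t (hsub ht)).mono hsub).sub h1
    have h3 : ‖(y b - b • y' b) - (y a - a • y' b)‖ ≤ (M2 * (b - a)) * ‖b - a‖ :=
      Convex.norm_image_sub_le_of_norm_hasDerivWithin_le hg hvar (convex_Icc _ _) ha' hb'
    have h4 : (y b - b • y' b) - (y a - a • y' b) = y b - y a - (b - a) • y' b := by
      rw [sub_smul]; abel
    have h5 : ‖b - a‖ = b - a := by rw [Real.norm_eq_abs, abs_of_nonneg (by linarith)]
    rw [h4, h5] at h3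
    calc ‖y b - y a - (b - a) • y' b‖ ≤ M2 * (b - a) * (b - a) := h3
      _ = M2 * (b - a) ^ 2 := by ring
  -- define K
  set M : ℕ := Nat.ceil (2 * T * L) with hMdef
  set G : ℕ → ℝ := fun k =>
    ((1 + (T / k) * L) / (1 - (T / k) * L)) ^ k * (T * C / (1 - (T / k) * L)) with hGdef
  set K := 1 + 2 * T * C * Real.exp (4 * T * L) + ∑ k ∈ Finset.range (M + 1), max (G k) 0
    with hKdef
  have hsumnn : 0 ≤ ∑ k ∈ Finset.range (M + 1), max (G k) 0 :=
    Finset.sum_nonneg fun k _ => le_max_right _ _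
  have hexpnn : 0 ≤ 2 * T * C * Real.exp (4 * T * L) :=
    mul_nonneg (mul_nonneg (by linarith) hCnn) (Real.exp_pos _).le
  have hKpos : 0 < K := by
    rw [hKdef]; linarith
  clear_value M1 M2 C M G K
  refine ⟨K, hKpos, ?_⟩
  intro Nt hNt Δt hΔt hΔtL u hu0 hune hustep
  have hΔtpos : 0 < Δt := by
    rw [hΔt]; exact div_pos hT (by exact_mod_cast hNt)
  have hNtΔt : (Nt : ℝ) * Δt = T := by
    rw [hΔt]; field_simp
  have hΔtLnn : 0 ≤ Δt * L := mul_nonneg hΔtpos.le hL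
  have hρ0 : 0 < 1 - Δt * L := by linarith
  -- time points in the interval
  have htmem : ∀ m : ℕ, m ≤ Nt → (m : ℝ) * Δt ∈ Set.Icc (0:ℝ) T := by
    intro m hm
    constructor
    · positivity
    · rw [← hNtΔt]
      exact mul_le_mul_of_nonneg_right (by exact_mod_cast hm) hΔtpos.le
  -- the one-step inequality
  have hstep : ∀ n, n < Nt →
      (1 - Δt * L) * ‖y ((n + 1 : ℕ) * Δt) - u (n + 1)‖
        ≤ (1 + Δt * L) * ‖y ((n : ℕ) * Δt) - u n‖ + Δt ^ 2 * C := by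
    intro n hn
    set t1 : ℝ := ((n + 1 : ℕ) : ℝ) * Δt with ht1
    set tn : ℝ := ((n : ℕ) : ℝ) * Δt with htn
    have ht1mem : t1 ∈ Set.Icc (0:ℝ) T := htmem (n + 1) hn
    have htnmem : tn ∈ Set.Icc (0:ℝ) T := htmem n hn.le
    have ht1tn : t1 - tn = Δt := by rw [ht1, htn]; push_cast; ring
    have hun : u n ≠ 0 := hune n hn.le
    set p : EuclideanSpace ℝ (Fin Nh) := ((‖u n‖ ^ 2)⁻¹ * ⟪u n, u (n + 1)⟫) • u n with hp
    have hunext : u (n + 1) = u n + Δt • f t1 p := by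
      rw [hustep n hn, imexrb_mulVec_eq]
    -- error decomposition
    have hdecomp : y t1 - u (n + 1)
        = (y t1 - y tn - Δt • y' t1) + (y tn - u n) + Δt • (y' t1 - f t1 p) := by
      rw [hunext, smul_sub]
      abel
    -- truncation bound
    have hτ : ‖y t1 - y tn - Δt • y' t1‖ ≤ M2 * Δt ^ 2 := by
      have := htrunc tn t1 htnmem ht1mem (by rw [← sub_nonneg, ht1tn]; exact hΔtpos.le)
      rwa [ht1tn] at this
    -- distance from y t1 to u n
    have hytn : ‖y t1 - u n‖ ≤ M1 * Δt + ‖y tn - u n‖ := by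
      have h1 : ‖y t1 - u n‖ ≤ ‖y t1 - y tn‖ + ‖y tn - u n‖ := by
        have := norm_sub_le_norm_sub_add_norm_sub (y t1) (y tn) (u n)
        exact this
      have h2 : ‖y t1 - y tn‖ ≤ M1 * Δt := by
        have := hyLip tn htnmem t1 ht1mem
        rwa [show t1 - tn = Δt from ht1tn, Real.norm_eq_abs, abs_of_nonneg hΔtpos.le] at this
      linarith
    -- Lipschitz bound on the f difference
    have hfd : ‖y' t1 - f t1 p‖ ≤ L * (‖y t1 - u (n + 1)‖ + (M1 * Δt + ‖y tn - u n‖)) := by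
      rw [hode t1 ht1mem]
      calc ‖f t1 (y t1) - f t1 p‖ ≤ L * ‖y t1 - p‖ := hLip t1 (y t1) p
        _ ≤ L * (‖y t1 - u (n + 1)‖ + ‖y t1 - u n‖) :=
            mul_le_mul_of_nonneg_left (imexrb_proj_dist (u n) (y t1) (u (n + 1)) hun) hL
        _ ≤ L * (‖y t1 - u (n + 1)‖ + (M1 * Δt + ‖y tn - u n‖)) :=
            mul_le_mul_of_nonneg_left (by linarith) hL
    -- assemble
    have h1 : ‖y t1 - u (n + 1)‖
        ≤ M2 * Δt ^ 2 + ‖y tn - u n‖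
          + Δt * (L * (‖y t1 - u (n + 1)‖ + (M1 * Δt + ‖y tn - u n‖))) := by
      calc ‖y t1 - u (n + 1)‖
          ≤ ‖y t1 - y tn - Δt • y' t1‖ + ‖y tn - u n‖ + ‖Δt • (y' t1 - f t1 p)‖ := by
            rw [hdecomp]
            exact norm_add₃_le
        _ ≤ M2 * Δt ^ 2 + ‖y tn - u n‖
            + Δt * (L * (‖y t1 - u (n + 1)‖ + (M1 * Δt + ‖y tn - u n‖))) := by
            rw [norm_smul, Real.norm_eq_abs, abs_of_nonneg hΔtpos.le]
            exact add_le_add (add_le_add hτ (le_refl _))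
              (mul_le_mul_of_nonneg_left hfd hΔtpos.le)
    rw [hC]
    nlinarith [h1]
  -- recursion in compact form
  set ρ := (1 + Δt * L) / (1 - Δt * L) with hρdef
  set D := Δt ^ 2 * C / (1 - Δt * L) with hDdef
  have hρ1 : 1 ≤ ρ := by
    rw [hρdef, le_div_iff₀ hρ0]; linarith
  have hDnn : 0 ≤ D := by
    rw [hDdef]
    exact div_nonneg (mul_nonneg (sq_nonneg _) hCnn) hρ0.le
  clear_value ρ D
  have hrec : ∀ n, n < Nt →
      ‖y ((n + 1 : ℕ) * Δt) - u (n + 1)‖ ≤ ρ * ‖y ((n : ℕ) * Δt) - u n‖ + D := by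
    intro n hn
    have h2 : ρ * ‖y ((n : ℕ) * Δt) - u n‖ + D
        = ((1 + Δt * L) * ‖y ((n : ℕ) * Δt) - u n‖ + Δt ^ 2 * C) / (1 - Δt * L) := by
      rw [hρdef, hDdef]; field_simp
    rw [h2, le_div_iff₀ hρ0]
    have := hstep n hn
    linarith
  -- discrete Gronwall
  have hind : ∀ n, n ≤ Nt → ‖y ((n : ℕ) * Δt) - u n‖ ≤ ρ ^ n * (n * D) := by
    intro n
    induction n with
    | zero => intro _; simp [hu0]
    | succ n ih =>
      intro h
      have hn' : n < Nt := h
      have h1 := hrec n hn'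
      have h2 := ih hn'.le
      have h3 : 1 ≤ ρ ^ (n + 1) := one_le_pow₀ hρ1
      have h4 : ρ * (ρ ^ n * ((n : ℝ) * D)) = ρ ^ (n + 1) * ((n : ℝ) * D) := by ring
      have h5 : ρ * ‖y ((n : ℕ) * Δt) - u n‖ ≤ ρ * (ρ ^ n * ((n : ℝ) * D)) :=
        mul_le_mul_of_nonneg_left h2 (le_trans zero_le_one hρ1)
      have h6 : D ≤ ρ ^ (n + 1) * D := le_mul_of_one_le_left hDnn h3
      calc ‖y (((n + 1 : ℕ) : ℝ) * Δt) - u (n + 1)‖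
          ≤ ρ * ‖y ((n : ℕ) * Δt) - u n‖ + D := h1
        _ ≤ ρ ^ (n + 1) * ((n : ℝ) * D) + ρ ^ (n + 1) * D := add_le_add (h5.trans_eq h4) h6
        _ = ρ ^ (n + 1) * (((n + 1 : ℕ) : ℝ) * D) := by push_cast; ring
  -- final bound
  intro n hn
  have hfin : ‖y ((n : ℕ) * Δt) - u n‖ ≤ (ρ ^ Nt * (T * C / (1 - Δt * L))) * Δt := by
    have h1 := hind n hn
    have h2 : ρ ^ n ≤ ρ ^ Nt := pow_le_pow_right₀ hρ1 hn
    have h3 : (n : ℝ) * D ≤ (Nt : ℝ) * D :=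
      mul_le_mul_of_nonneg_right (by exact_mod_cast hn) hDnn
    have h4 : (Nt : ℝ) * D = (T * C / (1 - Δt * L)) * Δt := by
      rw [hDdef, ← hNtΔt]
      ring
    have h5 : 0 ≤ (n : ℝ) * D := mul_nonneg (Nat.cast_nonneg n) hDnn
    calc ‖y ((n : ℕ) * Δt) - u n‖ ≤ ρ ^ n * (n * D) := h1
      _ ≤ ρ ^ Nt * ((Nt : ℝ) * D) :=
          mul_le_mul h2 h3 h5 (pow_nonneg (zero_le_one.trans hρ1) Nt)
      _ = (ρ ^ Nt * (T * C / (1 - Δt * L))) * Δt := by rw [h4]; ring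
  have hKbound : ρ ^ Nt * (T * C / (1 - Δt * L)) ≤ K := by
    rcases le_or_gt (Δt * L) (1 / 2) with hhalf | hhalf
    · -- small Δt: uniform bound
      have hρexp : ρ ≤ Real.exp (4 * (Δt * L)) := by
        have h1 : ρ ≤ 1 + 4 * (Δt * L) := by
          rw [hρdef, div_le_iff₀ hρ0]; nlinarith
        have h2 : 4 * (Δt * L) + 1 ≤ Real.exp (4 * (Δt * L)) := Real.add_one_le_exp _
        linarith
      have hpow : ρ ^ Nt ≤ Real.exp (4 * T * L) := by
        calc ρ ^ Nt ≤ Real.exp (4 * (Δt * L)) ^ Nt :=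
              pow_le_pow_left₀ (by linarith) hρexp Nt
          _ = Real.exp ((Nt : ℝ) * (4 * (Δt * L))) := (Real.exp_nat_mul _ Nt).symm
          _ = Real.exp (4 * T * L) := by rw [show (Nt : ℝ) * (4 * (Δt * L)) = 4 * T * L by
              rw [← hNtΔt]; ring]
      have hdiv : T * C / (1 - Δt * L) ≤ 2 * T * C := by
        rw [div_le_iff₀ hρ0]; nlinarith [mul_nonneg hT.le hCnn]
      have h6 : ρ ^ Nt * (T * C / (1 - Δt * L)) ≤ Real.exp (4 * T * L) * (2 * T * C) := by
        apply mul_le_mul hpow hdiv (div_nonneg (mul_nonneg hT.le hCnn) hρ0.le)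
          (Real.exp_pos _).le
      rw [hKdef]
      nlinarith [hsumnn]
    · -- large Δt: finitely many values of Nt
      have hLpos : 0 < L := by nlinarith
      have hNtM : Nt < M + 1 := by
        have h1 : (Nt : ℝ) < 2 * T * L := by
          have h2 : (Nt : ℝ) * (Δt * L) ≤ (Nt : ℝ) * (Δt * L) := le_refl _
          have h3 : (Nt : ℝ) * Δt * L = T * L := by rw [hNtΔt]
          have h4 : (0:ℝ) < Nt := by exact_mod_cast hNt
          nlinarith
        have h5 : (Nt : ℝ) < (M : ℝ) + 1 := lt_of_lt_of_le h1
          (le_trans (Nat.le_ceil _) (by rw [hMdef]; linarith))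
        exact_mod_cast h5
      have hGNt : G Nt = ρ ^ Nt * (T * C / (1 - Δt * L)) := by
        simp only [hGdef, hρdef]
        rw [← hΔt]
      rw [hKdef, ← hGNt]
      have h7 : G Nt ≤ ∑ k ∈ Finset.range (M + 1), max (G k) 0 :=
        le_trans (le_max_left _ _)
          (Finset.single_le_sum (fun k _ => le_max_right (G k) 0)
            (Finset.mem_range.mpr hNtM))
      nlinarith [mul_nonneg (mul_nonneg (by linarith : (0:ℝ) ≤ 2 * T) hCnn)
        (Real.exp_pos (4 * T * L)).le]
  calc ‖y ((n : ℕ) * Δt) - u n‖ ≤ (ρ ^ Nt * (T * C / (1 - Δt * L))) * Δt := hfin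
    _ ≤ K * Δt := mul_le_mul_of_nonneg_right hKbound hΔtpos.le
end
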